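/- Concrete fractional extreme point (instance verifying Lemma 1): the point (z*, v*) with z*_i = 1/2 for all i ∈ Fin 6 and v* = 0 belongs to the polyhedron Q₀ and is an extreme point of Q₀ (in the sense of Set.extremePoints over ℝ), and it is not integral. -/

import Mathlib

/-- The polyhedron `Q₀ ⊆ ℝ⁶ × ℝ⁹` from the proof of Lemma 1: the LP relaxation of the
reduced matching formulation for the instance with `T = 3`, `L = 6`, `P = 3`, three
categories per covariate, covariate values `x₁ = (1,1,1)`, `x₂ = (3,3,3)`,
`x₃ = (1,2,3)`, `x₄ = (3,2,1)`, `x₅ = (2,1,2)`, `x₆ = (2,3,2)`, and `N p k = 1` for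
all `p, k`. -/
def Q₀ : Set ((Fin 6 → ℝ) × (Fin 3 → Fin 3 → ℝ)) :=
  {zv |
    |zv.1 0 + zv.1 2 - 1| ≤ zv.2 0 0 ∧
    |zv.1 4 + zv.1 5 - 1| ≤ zv.2 0 1 ∧
    |zv.1 1 + zv.1 3 - 1| ≤ zv.2 0 2 ∧
    |zv.1 0 + zv.1 4 - 1| ≤ zv.2 1 0 ∧
    |zv.1 2 + zv.1 3 - 1| ≤ zv.2 1 1 ∧
    |zv.1 1 + zv.1 5 - 1| ≤ zv.2 1 2 ∧
    |zv.1 0 + zv.1 3 - 1| ≤ zv.2 2 0 ∧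
    |zv.1 4 + zv.1 5 - 1| ≤ zv.2 2 1 ∧
    |zv.1 1 + zv.1 2 - 1| ≤ zv.2 2 2 ∧
    zv.1 0 + zv.1 1 + zv.1 2 + zv.1 3 + zv.1 4 + zv.1 5 = 3 ∧
    ∀ i, 0 ≤ zv.1 i ∧ zv.1 i ≤ 1}

/-- The point `(z*, v*)` with all `z`-coordinates equal to `1/2` and `v* = 0`. -/
noncomputable def halfPoint : (Fin 6 → ℝ) × (Fin 3 → Fin 3 → ℝ) :=
  ((fun _ => 1 / 2), (fun _ _ => 0))

lemma zero_of_convex {a b u v : ℝ} (ha : 0 < a) (hb : 0 < b)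
    (hu : 0 ≤ u) (hv : 0 ≤ v) (h : a * u + b * v = 0) : u = 0 ∧ v = 0 :=
  ⟨by nlinarith, by nlinarith⟩

lemma mem_Q₀_eq_half {x : (Fin 6 → ℝ) × (Fin 3 → Fin 3 → ℝ)}
    (hx : x ∈ Q₀) (hv : ∀ p k, x.2 p k = 0) : x = halfPoint := by
  obtain ⟨h1, h2, h3, h4, h5, h6, h7, h8, h9, hs, hbd⟩ := hx
  rw [hv 0 0] at h1; rw [hv 0 1] at h2; rw [hv 0 2] at h3
  rw [hv 1 0] at h4; rw [hv 1 1] at h5; rw [hv 1 2] at h6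
  rw [hv 2 0] at h7; rw [hv 2 1] at h8; rw [hv 2 2] at h9
  have e1 := abs_nonpos_iff.mp h1
  have e2 := abs_nonpos_iff.mp h2
  have e3 := abs_nonpos_iff.mp h3
  have e4 := abs_nonpos_iff.mp h4
  have e5 := abs_nonpos_iff.mp h5
  have e6 := abs_nonpos_iff.mp h6
  have e7 := abs_nonpos_iff.mp h7
  have e9 := abs_nonpos_iff.mp h9
  have := hv
  ext i
  · fin_cases i <;> simp [halfPoint] <;> linarith
  · simp [halfPoint, hv]

/-- The point with all `z`-coordinates equal to `1/2` and `v = 0` belongs to `Q₀`, is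
an extreme point of `Q₀`, and is not integral. -/
theorem half_point_is_fractional_extreme_point :
    halfPoint ∈ Q₀ ∧
    halfPoint ∈ Set.extremePoints ℝ Q₀ ∧
    ¬((∀ i : Fin 6, ∃ n : ℤ, halfPoint.1 i = (n : ℝ)) ∧
      (∀ (p k : Fin 3), ∃ n : ℤ, halfPoint.2 p k = (n : ℝ))) := by
  have hmem : halfPoint ∈ Q₀ := by
    refine ⟨?_, ?_, ?_, ?_, ?_, ?_, ?_, ?_, ?_, ?_, fun i => ?_⟩ <;>
      simp [halfPoint] <;> norm_num
  refine ⟨hmem, ⟨hmem, ?_⟩, ?_⟩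
  · intro x hx y hy hseg
    obtain ⟨a, b, ha, hb, hab, heq⟩ := hseg
    have hvz : ∀ p k, x.2 p k = 0 ∧ y.2 p k = 0 := by
      intro p k
      have hzero : a * x.2 p k + b * y.2 p k = 0 := by
        have := congrFun (congrFun (congrArg Prod.snd heq) p) k
        simpa [halfPoint, Prod.smul_def, Pi.smul_apply, smul_eq_mul] using this
      have hxnn : 0 ≤ x.2 p k := by
        obtain ⟨h1, h2, h3, h4, h5, h6, h7, h8, h9, -, -⟩ := hx
        fin_cases p <;> fin_cases k <;>
          first
          | exact le_trans (abs_nonneg _) h1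
          | exact le_trans (abs_nonneg _) h2
          | exact le_trans (abs_nonneg _) h3
          | exact le_trans (abs_nonneg _) h4
          | exact le_trans (abs_nonneg _) h5
          | exact le_trans (abs_nonneg _) h6
          | exact le_trans (abs_nonneg _) h7
          | exact le_trans (abs_nonneg _) h8
          | exact le_trans (abs_nonneg _) h9
      have hynn : 0 ≤ y.2 p k := by
        obtain ⟨h1, h2, h3, h4, h5, h6, h7, h8, h9, -, -⟩ := hy
        fin_cases p <;> fin_cases k <;>
          first
          | exact le_trans (abs_nonneg _) h1
          | exact le_trans (abs_nonneg _) h2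
          | exact le_trans (abs_nonneg _) h3
          | exact le_trans (abs_nonneg _) h4
          | exact le_trans (abs_nonneg _) h5
          | exact le_trans (abs_nonneg _) h6
          | exact le_trans (abs_nonneg _) h7
          | exact le_trans (abs_nonneg _) h8
          | exact le_trans (abs_nonneg _) h9
      exact zero_of_convex ha hb hxnn hynn hzero
    exact mem_Q₀_eq_half hx (fun p k => (hvz p k).1)
  · rintro ⟨hz, -⟩
    obtain ⟨n, hn⟩ := hz 0
    simp only [halfPoint] at hn
    have : (2 : ℝ) * n = 1 := by linarith
    have h2 : (2 * n : ℤ) = 1 := by exact_mod_cast (by push_cast; linarith : ((2*n : ℤ) : ℝ) = 1)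
    omega
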